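/- arXiv:1907.13533 — 2 statements merged into one kernel-verified Lean document; each statement's English description precedes it below -/
import Mathlib

section
/- Let (b_m)_{m≥0} be a nonincreasing sequence in [0,1) with b₀ < 1, and define b*_n as the probability that the house-of-cards Markov chain started at 0 with transitions P(i,i+1)=1−b_i, P(i,0)=b_i is at 0 at time n. For any nonnegative integer k, if Σ_{m≥1} m^k b_m < ∞ then Σ_{m≥1} m^k b*_m < ∞. -/
open Finset

/-- Distribution of the "house-of-cards" Markov chain on `ℕ` started at `0`, with
transitions `P(i, i+1) = 1 - b i` and `P(i, 0) = b i`: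
`hoc b n j` is the probability that the chain is at state `j` at time `n`. -/
noncomputable def hoc (b : ℕ → ℝ) : ℕ → ℕ → ℝ
  | 0 => fun j => if j = 0 then 1 else 0
  | n + 1 => fun j =>
      match j with
      | 0 => ∑' i, hoc b n i * b i
      | i + 1 => hoc b n i * (1 - b i)


lemma hoc_zero_zero (b : ℕ → ℝ) : hoc b 0 0 = 1 := rfl

lemma hoc_succ_zero (b : ℕ → ℝ) (n : ℕ) : hoc b (n+1) 0 = ∑' i, hoc b n i * b i := rfl

lemma hoc_succ_succ (b : ℕ → ℝ) (n i : ℕ) : hoc b (n+1) (i+1) = hoc b n i * (1 - b i) := rfl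

lemma hoc_eq_zero (b : ℕ → ℝ) : ∀ n i, n < i → hoc b n i = 0 := by
  intro n
  induction n with
  | zero => intro i hi; match i, hi with
    | i+1, _ => rfl
  | succ n ih =>
    intro i hi
    match i, hi with
    | i+1, hi =>
      rw [hoc_succ_succ, ih i (by omega), zero_mul]

lemma hoc_shift (b : ℕ → ℝ) : ∀ i j, hoc b (j + i) i = hoc b j 0 * ∏ m ∈ range i, (1 - b m) := by
  intro i
  induction i with
  | zero => intro j; simp
  | succ i ih =>
    intro j
    have : j + (i+1) = (j + i) + 1 := by omega
    rw [this, hoc_succ_succ, ih j, prod_range_succ, mul_assoc]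

lemma hoc_nonneg (b : ℕ → ℝ) (hb0 : ∀ m, 0 ≤ b m) (hb1 : ∀ m, b m ≤ 1) :
    ∀ n i, 0 ≤ hoc b n i := by
  intro n
  induction n with
  | zero => intro i; unfold hoc; positivity
  | succ n ih =>
    intro i
    match i with
    | 0 =>
      rw [hoc_succ_zero]
      exact tsum_nonneg fun i => mul_nonneg (ih i) (hb0 i)
    | i+1 =>
      rw [hoc_succ_succ]
      exact mul_nonneg (ih i) (by linarith [hb1 i])

lemma hoc_rec (b : ℕ → ℝ) (n : ℕ) :
    hoc b (n+1) 0 = ∑ i ∈ range (n+1), hoc b (n-i) 0 * (∏ m ∈ range i, (1 - b m)) * b i := by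
  rw [hoc_succ_zero]
  rw [tsum_eq_sum (s := range (n+1)) (by
    intro i hi
    rw [hoc_eq_zero b n i (by simpa using hi), zero_mul])]
  refine Finset.sum_congr rfl fun i hi => ?_
  have hin : i ≤ n := by simpa [Nat.lt_succ_iff] using hi
  have : n = (n - i) + i := by omega
  rw [this, hoc_shift b i (n - i)]
  simp

lemma pib_nonneg (b : ℕ → ℝ) (hb1 : ∀ m, b m ≤ 1) (i : ℕ) :
    0 ≤ ∏ m ∈ range i, (1 - b m) :=
  Finset.prod_nonneg fun m _ => by linarith [hb1 m]

lemma pib_le_one (b : ℕ → ℝ) (hb0 : ∀ m, 0 ≤ b m) (hb1 : ∀ m, b m ≤ 1) (i : ℕ) :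
    ∏ m ∈ range i, (1 - b m) ≤ 1 :=
  Finset.prod_le_one (fun m _ => by linarith [hb1 m]) (fun m _ => by linarith [hb0 m])

lemma pib_telescope (b : ℕ → ℝ) (N : ℕ) :
    ∑ i ∈ range N, (∏ m ∈ range i, (1 - b m)) * b i = 1 - ∏ m ∈ range N, (1 - b m) := by
  induction N with
  | zero => simp
  | succ N ih =>
    rw [Finset.sum_range_succ, ih, prod_range_succ]
    ring

lemma hoc_zero_le_one (b : ℕ → ℝ) (hb0 : ∀ m, 0 ≤ b m) (hb1 : ∀ m, b m ≤ 1) :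
    ∀ n, hoc b n 0 ≤ 1 := by
  intro n
  induction n using Nat.strong_induction_on with
  | _ n ih =>
    match n with
    | 0 => simp [hoc_zero_zero]
    | n+1 =>
      rw [hoc_rec]
      calc ∑ i ∈ range (n+1), hoc b (n-i) 0 * (∏ m ∈ range i, (1 - b m)) * b i
          ≤ ∑ i ∈ range (n+1), (∏ m ∈ range i, (1 - b m)) * b i := by
            refine Finset.sum_le_sum fun i hi => ?_
            have h1 : hoc b (n-i) 0 ≤ 1 := ih (n-i) (by omega)
            have h2 : 0 ≤ ∏ m ∈ range i, (1 - b m) := pib_nonneg b hb1 i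
            have := hb0 i
            nlinarith [hoc_nonneg b hb0 hb1 (n-i) 0, mul_nonneg h2 this]
        _ = 1 - ∏ m ∈ range (n+1), (1 - b m) := pib_telescope b (n+1)
        _ ≤ 1 := by linarith [pib_nonneg b hb1 (n+1)]

lemma exp_le_one_sub (b0 x : ℝ) (hx0 : 0 ≤ x) (hxb : x ≤ b0) (hb : b0 < 1) :
    Real.exp (-(x / (1 - b0))) ≤ 1 - x := by
  set t := x / (1 - b0) with ht
  have h1b : (0:ℝ) < 1 - b0 := by linarith
  have ht0 : 0 ≤ t := div_nonneg hx0 (le_of_lt h1b)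
  have htx : t * (1 - b0) = x := div_mul_cancel₀ x (ne_of_gt h1b)
  have he : 1 + t ≤ Real.exp t := by linarith [Real.add_one_le_exp t]
  have h1 : Real.exp (-t) ≤ 1 / (1 + t) := by
    have := one_div_le_one_div_of_le (show (0:ℝ) < 1 + t by linarith) he
    rw [Real.exp_neg, ← one_div]
    exact this
  have h2 : 1 / (1 + t) ≤ 1 - x := by
    rw [div_le_iff₀ (by linarith)]
    nlinarith
  linarith

lemma pib_ge (b : ℕ → ℝ) (hb0 : ∀ m, 0 ≤ b m) (hb01 : b 0 < 1) (hmono : Antitone b) (N : ℕ) :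
    Real.exp (-((∑ m ∈ range N, b m) / (1 - b 0))) ≤ ∏ m ∈ range N, (1 - b m) := by
  have : -((∑ m ∈ range N, b m) / (1 - b 0)) = ∑ m ∈ range N, -(b m / (1 - b 0)) := by
    rw [Finset.sum_neg_distrib, ← Finset.sum_div]
  rw [this, Real.exp_sum]
  refine Finset.prod_le_prod (fun m _ => (Real.exp_pos _).le) fun m _ => ?_
  exact exp_le_one_sub (b 0) (b m) (hb0 m) (hmono (Nat.zero_le m)) hb01

lemma triangle_le (g h : ℕ → ℝ) (hg : ∀ i, 0 ≤ g i) (hh : ∀ j, 0 ≤ h j) (N : ℕ) :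
    ∑ n ∈ range N, ∑ i ∈ range (n+1), g i * h (n - i)
      ≤ (∑ i ∈ range N, g i) * (∑ j ∈ range N, h j) := by
  have key : ∑ n ∈ Finset.Ico 0 N, ∑ i ∈ Finset.Ico 0 (n+1), g i * h (n - i)
      = ∑ i ∈ Finset.Ico 0 N, ∑ n ∈ Finset.Ico i N, g i * h (n - i) :=
    (Finset.sum_Ico_Ico_comm 0 N (fun i n => g i * h (n - i))).symm
  simp only [← Finset.range_eq_Ico] at key
  rw [key, Finset.sum_mul]
  refine Finset.sum_le_sum fun i _ => ?_
  rw [← Finset.mul_sum, Finset.sum_Ico_eq_sum_range]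
  simp only [Nat.add_sub_cancel_left]
  have h2 : ∑ j ∈ range (N - i), h j ≤ ∑ j ∈ range N, h j := by
    apply Finset.sum_le_sum_of_subset_of_nonneg
    · exact Finset.range_subset_range.2 (Nat.sub_le N i)
    · exact fun j _ _ => hh j
  exact mul_le_mul_of_nonneg_left h2 (hg i)

/-- Polynomial moments: if `(b m)` is nonincreasing in `[0,1)` with `b 0 < 1` and
`Σ_{m≥1} m^k b m < ∞`, then `Σ_{m≥1} m^k b*_m < ∞` where `b*_n = P(S_n = 0)` for the
house-of-cards chain. -/
theorem stmt6 (b : ℕ → ℝ) (hb0 : ∀ m, 0 ≤ b m) (hb1 : ∀ m, b m < 1) (hb01 : b 0 < 1)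
    (hmono : Antitone b) (k : ℕ)
    (hsum : Summable fun m : ℕ => ((m + 1 : ℕ) : ℝ) ^ k * b (m + 1)) :
    Summable (fun m : ℕ => ((m + 1 : ℕ) : ℝ) ^ k * hoc b (m + 1) 0) := by
  classical
  have hb1' : ∀ m, b m ≤ 1 := fun m => (hb1 m).le
  set a : ℕ → ℝ := fun n => hoc b n 0 with ha
  have ha0 : ∀ n, 0 ≤ a n := fun n => hoc_nonneg b hb0 hb1' n 0
  set π : ℕ → ℝ := fun i => ∏ m ∈ range i, (1 - b m) with hπ
  -- summability of b
  have hsum' : Summable (fun m => b (m+1)) := by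
    refine Summable.of_nonneg_of_le (fun m => hb0 _) (fun m => ?_) hsum
    have h1 : (1:ℝ) ≤ ((m + 1 : ℕ) : ℝ) ^ k := one_le_pow₀ (by exact_mod_cast Nat.succ_le_succ (Nat.zero_le m))
    nlinarith [hb0 (m+1)]
  have hbsum : Summable b := (summable_nat_add_iff 1).mp hsum'
  set S : ℝ := ∑' m, b m with hS
  set c : ℝ := Real.exp (-(S / (1 - b 0))) with hc
  have hc0 : 0 < c := Real.exp_pos _
  have hπc : ∀ N, c ≤ π N := by
    intro N
    refine le_trans ?_ (pib_ge b hb0 hb01 hmono N)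
    apply Real.exp_le_exp.2
    have hpart : ∑ m ∈ range N, b m ≤ S := Summable.sum_le_tsum _ (fun m _ => hb0 m) hbsum
    have h1b : (0:ℝ) < 1 - b 0 := by linarith
    have := (div_le_div_iff_of_pos_right h1b).2 hpart
    linarith
  set ρ : ℝ := 1 - c with hρ
  have hρ1 : ρ < 1 := by simp [hρ]; linarith
  have hρ0 : 0 ≤ ρ := by
    have := hπc 0
    simp [hπ] at this
    simp [hρ]; linarith
  have hF : ∀ N, ∑ i ∈ range N, π i * b i ≤ ρ := by
    intro N
    rw [pib_telescope b N]
    have := hπc N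
    simp only [hρ]
    linarith
  set M : ℝ := b 0 + 2^k * ∑' m, ((m + 1 : ℕ) : ℝ) ^ k * b (m + 1) with hMdef
  have htsum0 : 0 ≤ ∑' m, ((m + 1 : ℕ) : ℝ) ^ k * b (m + 1) :=
    tsum_nonneg fun m => mul_nonneg (by positivity) (hb0 _)
  have hM0 : 0 ≤ M := by
    simp only [hMdef]
    have := hb0 0
    positivity
  have hM : ∀ p, p ≤ k → ∀ N, ∑ i ∈ range N, ((i + 1 : ℕ) : ℝ) ^ p * (π i * b i) ≤ M := by
    intro p hp N
    have step1 : ∑ i ∈ range N, ((i + 1 : ℕ) : ℝ) ^ p * (π i * b i)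
        ≤ ∑ i ∈ range N, ((i + 1 : ℕ) : ℝ) ^ p * b i := by
      refine Finset.sum_le_sum fun i _ => ?_
      have h1 : π i ≤ 1 := pib_le_one b hb0 hb1' i
      have h2 : 0 ≤ π i := pib_nonneg b hb1' i
      have h3 : (0:ℝ) ≤ ((i + 1 : ℕ) : ℝ) ^ p := by positivity
      have h4 : π i * b i ≤ b i := by nlinarith [hb0 i]
      exact mul_le_mul_of_nonneg_left h4 h3
    refine step1.trans ?_
    cases N with
    | zero => simpa using hM0
    | succ N =>
      rw [Finset.sum_range_succ']
      have hb0term : ((0 + 1 : ℕ) : ℝ) ^ p * b 0 = b 0 := by norm_num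
      rw [hb0term]
      have step2 : ∑ i ∈ range N, ((i + 1 + 1 : ℕ) : ℝ) ^ p * b (i + 1)
          ≤ ∑ i ∈ range N, 2^k * (((i + 1 : ℕ) : ℝ) ^ k * b (i + 1)) := by
        refine Finset.sum_le_sum fun i _ => ?_
        have hcast : ((i + 1 + 1 : ℕ) : ℝ) ≤ 2 * ((i + 1 : ℕ) : ℝ) := by push_cast; linarith
        have h1 : ((i + 1 + 1 : ℕ) : ℝ) ^ p ≤ (2 * ((i + 1 : ℕ) : ℝ)) ^ p :=
          pow_le_pow_left₀ (by positivity) hcast p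
        have h2 : (2 * ((i + 1 : ℕ) : ℝ)) ^ p ≤ (2 * ((i + 1 : ℕ) : ℝ)) ^ k := by
          refine pow_le_pow_right₀ ?_ hp
          have : (1:ℝ) ≤ ((i + 1 : ℕ) : ℝ) := by exact_mod_cast Nat.succ_le_succ (Nat.zero_le i)
          linarith
        have h3 : (2 * ((i + 1 : ℕ) : ℝ)) ^ k = 2^k * ((i + 1 : ℕ) : ℝ)^k := mul_pow 2 _ k
        have := hb0 (i+1)
        nlinarith [pow_nonneg (show (0:ℝ) ≤ ((i+1:ℕ):ℝ)*2 by positivity) k]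
      have step3 : ∑ i ∈ range N, 2^k * (((i + 1 : ℕ) : ℝ) ^ k * b (i + 1))
          ≤ 2^k * ∑' m, ((m + 1 : ℕ) : ℝ) ^ k * b (m + 1) := by
        rw [← Finset.mul_sum]
        refine mul_le_mul_of_nonneg_left ?_ (by positivity)
        exact Summable.sum_le_tsum _ (fun m _ => mul_nonneg (by positivity) (hb0 _)) hsum
      simp only [hMdef]
      linarith
  have ha1 : a 0 = 1 := hoc_zero_zero b
  have hHa : ∀ q N, ∑ j ∈ range N, (j:ℝ)^q * a j
      ≤ 1 + ∑ n ∈ range N, ((n+1:ℕ):ℝ)^q * a (n+1) := by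
    intro q N
    cases N with
    | zero => simp
    | succ N =>
      rw [Finset.sum_range_succ']
      have h0 : ((0:ℕ):ℝ)^q * a 0 ≤ 1 := by
        rw [ha1, mul_one]
        rcases Nat.eq_zero_or_pos q with hq | hq
        · simp [hq]
        · simp [zero_pow (Nat.pos_iff_ne_zero.mp hq)]
      have h1 : ∑ n ∈ range N, ((n+1:ℕ):ℝ)^q * a (n+1)
          ≤ ∑ n ∈ range (N+1), ((n+1:ℕ):ℝ)^q * a (n+1) := by
        refine Finset.sum_le_sum_of_subset_of_nonneg (Finset.range_subset_range.2 (by omega))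
          (fun n _ _ => mul_nonneg (by positivity) (ha0 _))
      push_cast at h0 h1 ⊢
      linarith
  have claim : ∀ l, l ≤ k → ∃ C, ∀ N, ∑ n ∈ range N, ((n+1:ℕ):ℝ)^l * a (n+1) ≤ C := by
    intro l
    induction l using Nat.strong_induction_on with
    | _ l ih =>
    intro hlk
    set D : ℕ → ℝ := fun m =>
      if h : m < l then (ih m h (le_of_lt (lt_of_lt_of_le h hlk))).choose else 0 with hDdef
    have hD : ∀ m, m < l → ∀ N, ∑ n ∈ range N, ((n+1:ℕ):ℝ)^m * a (n+1) ≤ D m := by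
      intro m h N
      simp only [hDdef, dif_pos h]
      exact (ih m h (le_of_lt (lt_of_lt_of_le h hlk))).choose_spec N
    have hD0 : ∀ m, m < l → 0 ≤ D m := by
      intro m h
      have := hD m h 0
      simpa using this
    set g : ℕ → ℕ → ℝ := fun p i => ((i+1:ℕ):ℝ)^p * (π i * b i) with hgdef
    set h' : ℕ → ℕ → ℝ := fun p j => (j:ℝ)^(l-p) * a j with hh'def
    have hg0 : ∀ p i, 0 ≤ g p i := fun p i =>
      mul_nonneg (by positivity) (mul_nonneg (pib_nonneg b hb1' i) (hb0 i))
    have hh'0 : ∀ p j, 0 ≤ h' p j := fun p j => mul_nonneg (by positivity) (ha0 j)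
    have stepA : ∀ n, ((n+1:ℕ):ℝ)^l * a (n+1)
        = ∑ i ∈ range (n+1), ∑ p ∈ range (l+1), (l.choose p : ℝ) * (g p i * h' p (n - i)) := by
      intro n
      have hrec : a (n+1) = ∑ i ∈ range (n+1), a (n-i) * π i * b i := hoc_rec b n
      rw [hrec, Finset.mul_sum]
      refine Finset.sum_congr rfl fun i hi => ?_
      have hin : i ≤ n := Nat.lt_succ_iff.mp (Finset.mem_range.mp hi)
      have hcast : ((n+1:ℕ):ℝ) = ((i+1:ℕ):ℝ) + ((n - i:ℕ):ℝ) := by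
        rw [show n+1 = (i+1)+(n-i) from by omega, Nat.cast_add]
      rw [hcast, add_pow, Finset.sum_mul]
      refine Finset.sum_congr rfl fun p _ => ?_
      simp only [hgdef, hh'def]
      ring
    set K : ℝ := ∑ p ∈ range l, (l.choose (p+1) : ℝ) * (M * (1 + D (l - (p+1)))) with hKdef
    refine ⟨(K + ρ) / c, fun N => ?_⟩
    set T : ℝ := ∑ n ∈ range N, ((n+1:ℕ):ℝ)^l * a (n+1) with hTdef
    have hT0 : 0 ≤ T :=
      Finset.sum_nonneg fun n _ => mul_nonneg (by positivity) (ha0 _)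
    have hT1 : T = ∑ p ∈ range (l+1), (l.choose p : ℝ) *
        ∑ n ∈ range N, ∑ i ∈ range (n+1), g p i * h' p (n - i) := by
      rw [hTdef]
      rw [Finset.sum_congr rfl fun n _ => stepA n]
      rw [Finset.sum_congr rfl fun n (_ : n ∈ range N) =>
        Finset.sum_comm (s := range (n+1)) (t := range (l+1))
          (f := fun i p => (l.choose p : ℝ) * (g p i * h' p (n - i)))]
      rw [Finset.sum_comm]
      exact Finset.sum_congr rfl fun p _ => by simp [Finset.mul_sum]
    have hT2 : T ≤ ∑ p ∈ range (l+1), (l.choose p : ℝ) *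
        ((∑ i ∈ range N, g p i) * (∑ j ∈ range N, h' p j)) := by
      rw [hT1]
      refine Finset.sum_le_sum fun p _ => ?_
      refine mul_le_mul_of_nonneg_left ?_ (by positivity)
      exact triangle_le (g p) (h' p) (hg0 p) (hh'0 p) N
    rw [Finset.sum_range_succ'] at hT2
    -- bound the p = 0 term
    have hG0 : ∑ i ∈ range N, g 0 i ≤ ρ := by
      have : ∑ i ∈ range N, g 0 i = ∑ i ∈ range N, π i * b i := by
        refine Finset.sum_congr rfl fun i _ => ?_
        simp [hgdef]
      rw [this]; exact hF N
    have hH0 : ∑ j ∈ range N, h' 0 j ≤ 1 + T := by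
      have : ∑ j ∈ range N, h' 0 j = ∑ j ∈ range N, (j:ℝ)^l * a j := by
        refine Finset.sum_congr rfl fun j _ => ?_
        simp [hh'def]
      rw [this]
      exact hHa l N
    have hterm0 : (l.choose 0 : ℝ) * ((∑ i ∈ range N, g 0 i) * (∑ j ∈ range N, h' 0 j))
        ≤ ρ * (1 + T) := by
      rw [Nat.choose_zero_right, Nat.cast_one, one_mul]
      refine mul_le_mul hG0 hH0 (Finset.sum_nonneg fun j _ => hh'0 0 j) hρ0
    -- bound the p ≥ 1 terms
    have htermsle : ∑ p ∈ range l, (l.choose (p+1) : ℝ) *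
        ((∑ i ∈ range N, g (p+1) i) * (∑ j ∈ range N, h' (p+1) j)) ≤ K := by
      rw [hKdef]
      refine Finset.sum_le_sum fun p hp => ?_
      have hpl : p + 1 ≤ l := Nat.succ_le_of_lt (Finset.mem_range.mp hp)
      refine mul_le_mul_of_nonneg_left ?_ (by positivity)
      have hG : ∑ i ∈ range N, g (p+1) i ≤ M := hM (p+1) (le_trans hpl hlk) N
      have hH : ∑ j ∈ range N, h' (p+1) j ≤ 1 + D (l - (p+1)) := by
        have hlt : l - (p+1) < l := by omega
        refine (hHa (l - (p+1)) N).trans ?_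
        have := hD (l - (p+1)) hlt N
        linarith
      refine mul_le_mul hG hH (Finset.sum_nonneg fun j _ => hh'0 _ j) hM0
    have hT3 : T ≤ K + (ρ + ρ * T) := by
      have h4 : ρ * (1 + T) = ρ + ρ * T := by ring
      nlinarith [hT2, hterm0, htermsle]
    rw [le_div_iff₀ hc0]
    have hcρ : c = 1 - ρ := by simp [hρ]
    have hTc : T * c = T - ρ * T := by rw [hcρ]; ring
    linarith [hT3, hTc]
  obtain ⟨C, hC⟩ := claim k le_rfl
  exact summable_of_sum_range_le
    (fun n => mul_nonneg (by positivity) (ha0 _)) hC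
end

section
/- Under the same hypotheses on (G_{y,x}), the limit function H satisfies, for any y and any two covariate sequences x, x̄: |H(y_{t−1}^−, x_t^−) − H(y_{t−1}^−, x̄_t^−)| ≤ Σ_{j=0}^∞ κ^j Σ_{i=1}^r L^i |x_{t−jr−i+1} − x̄_{t−jr−i+1}|. -/
open Classical

/-- Backward iterates of the observation-driven recursion:
`backIter G y x t n z = G (y (t-1)) (x t) (G (y (t-2)) (x (t-1)) (… (G (y (t-n)) (x (t-n+1)) z)))`,
the composition of the `n` maps `G_{y_{t-1},x_t} ∘ ⋯ ∘ G_{y_{t-n},x_{t-n+1}}` applied to `z`. -/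
def backIter {E V W : Type*} (G : E → V → W → W) (y : ℤ → E) (x : ℤ → V) :
    ℤ → ℕ → W → W
  | _, 0, z => z
  | t, n + 1, z => G (y (t - 1)) (x t) (backIter G y x (t - 1) n z)

lemma backIter_add {E V W : Type*} (G : E → V → W → W) (y : ℤ → E) (x : ℤ → V)
    (a b : ℕ) : ∀ (t : ℤ) (z : W),
    backIter G y x t (a + b) z = backIter G y x t a (backIter G y x (t - a) b z) := by
  induction a with
  | zero => intro t z; simp [backIter]
  | succ a ih =>
    intro t z
    have h : a + 1 + b = (a + b) + 1 := by omega
    rw [h]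
    simp only [backIter]
    rw [ih]
    have hidx : t - 1 - (a : ℤ) = t - ((a + 1 : ℕ) : ℤ) := by push_cast; ring
    rw [hidx]

lemma backIter_lipX {E V W : Type*} [NormedAddCommGroup V] [NormedAddCommGroup W]
    (G : E → V → W → W) (L : ℝ) (hL : 1 ≤ L)
    (hLip : ∀ (y y' : E) (x x' : V) (z z' : W),
      ‖G y x z - G y' x' z'‖ ≤
        L * ((if y = y' then (0 : ℝ) else 1) + ‖x - x'‖ + ‖z - z'‖))
    (y : ℤ → E) (x x' : ℤ → V) :
    ∀ (n : ℕ) (t : ℤ) (z : W),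
    ‖backIter G y x t n z - backIter G y x' t n z‖ ≤
      ∑ i ∈ Finset.range n, L ^ (i + 1) * ‖x (t - i) - x' (t - i)‖ := by
  have hL0 : (0 : ℝ) ≤ L := zero_le_one.trans hL
  intro n
  induction n with
  | zero => intro t z; simp [backIter]
  | succ n ih =>
    intro t z
    simp only [backIter]
    have hidx : ∀ i : ℕ, t - 1 - (i : ℤ) = t - ((i + 1 : ℕ) : ℤ) := by
      intro i; push_cast; ring
    calc ‖G (y (t - 1)) (x t) (backIter G y x (t - 1) n z) -
            G (y (t - 1)) (x' t) (backIter G y x' (t - 1) n z)‖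
        ≤ L * ((if y (t - 1) = y (t - 1) then (0 : ℝ) else 1) + ‖x t - x' t‖ +
            ‖backIter G y x (t - 1) n z - backIter G y x' (t - 1) n z‖) :=
          hLip _ _ _ _ _ _
      _ ≤ L * (0 + ‖x t - x' t‖ +
            ∑ i ∈ Finset.range n, L ^ (i + 1) * ‖x (t - 1 - i) - x' (t - 1 - i)‖) := by
          rw [if_pos rfl]
          gcongr
          exact ih (t - 1) z
      _ = ∑ i ∈ Finset.range (n + 1), L ^ (i + 1) * ‖x (t - i) - x' (t - i)‖ := by
          simp only [hidx]
          rw [Finset.sum_range_succ']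
          simp only [Nat.cast_zero, sub_zero, zero_add, mul_add, Finset.mul_sum]
          rw [add_comm]
          congr 1
          · refine Finset.sum_congr rfl fun i _ => ?_
            ring
          · ring

/-- Lipschitz dependence of `H(y_{t-1}^-, ·)` on the covariate path:
`‖H(y_{t-1}^-, x_t^-) - H(y_{t-1}^-, x̄_t^-)‖ ≤
  Σ_{j=0}^∞ κ^j Σ_{i=1}^r L^i ‖x_{t-jr-i+1} - x̄_{t-jr-i+1}‖`. -/
theorem stmt14 {E V W : Type*} [NormedAddCommGroup V] [NormedAddCommGroup W]
    [CompleteSpace W]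
    (G : E → V → W → W) (L : ℝ) (hL : 1 ≤ L)
    (hLip : ∀ (y y' : E) (x x' : V) (z z' : W),
      ‖G y x z - G y' x' z'‖ ≤
        L * ((if y = y' then (0 : ℝ) else 1) + ‖x - x'‖ + ‖z - z'‖))
    (r : ℕ) (hr : 0 < r) (κ : ℝ) (hκ : κ ∈ Set.Ioo (0 : ℝ) 1)
    (hcontract : ∀ (y : ℤ → E) (x : ℤ → V) (t : ℤ) (z z' : W),
      ‖backIter G y x t r z - backIter G y x t r z'‖ ≤ κ * ‖z - z'‖)
    (y : ℤ → E) (x x' : ℤ → V)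
    (hx : ∀ t : ℤ, Summable fun i : ℕ => κ ^ ((i : ℝ) / (r : ℝ)) * ‖x (t - i)‖)
    (hx' : ∀ t : ℤ, Summable fun i : ℕ => κ ^ ((i : ℝ) / (r : ℝ)) * ‖x' (t - i)‖)
    (t : ℤ) (lam lam' : W)
    (hlam : Filter.Tendsto (fun n : ℕ => backIter G y x t (n + 1) 0)
      Filter.atTop (nhds lam))
    (hlam' : Filter.Tendsto (fun n : ℕ => backIter G y x' t (n + 1) 0)
      Filter.atTop (nhds lam')) :
    ‖lam - lam'‖ ≤
      ∑' j : ℕ, κ ^ j *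
        ∑ i ∈ Finset.range r, L ^ (i + 1) * ‖x (t - j * r - i) - x' (t - j * r - i)‖ := by
  obtain ⟨hκ0, hκ1⟩ := hκ
  have hL0 : (0 : ℝ) ≤ L := zero_le_one.trans hL
  set f : ℕ → ℝ := fun j => κ ^ j *
      ∑ i ∈ Finset.range r, L ^ (i + 1) * ‖x (t - j * r - i) - x' (t - j * r - i)‖ with hf
  have hfnn : ∀ j, 0 ≤ f j := by
    intro j
    apply mul_nonneg (pow_nonneg hκ0.le _)
    exact Finset.sum_nonneg fun i _ => mul_nonneg (pow_nonneg hL0 _) (norm_nonneg _)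
  -- block bound
  have key : ∀ (m : ℕ) (s : ℤ), ‖backIter G y x s (m * r) 0 - backIter G y x' s (m * r) 0‖ ≤
      ∑ j ∈ Finset.range m, κ ^ j *
        ∑ i ∈ Finset.range r, L ^ (i + 1) * ‖x (s - j * r - i) - x' (s - j * r - i)‖ := by
    intro m
    induction m with
    | zero => intro s; simp [backIter]
    | succ m ih =>
      intro s
      have hsplit : (m + 1) * r = r + m * r := by ring
      rw [hsplit, backIter_add, backIter_add]
      set W1 := backIter G y x (s - r) (m * r) 0 with hW1
      set W2 := backIter G y x' (s - r) (m * r) 0 with hW2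
      have tri : ‖backIter G y x s r W1 - backIter G y x' s r W2‖ ≤
          ‖backIter G y x s r W1 - backIter G y x s r W2‖ +
          ‖backIter G y x s r W2 - backIter G y x' s r W2‖ := by
        have := norm_add_le (backIter G y x s r W1 - backIter G y x s r W2)
          (backIter G y x s r W2 - backIter G y x' s r W2)
        simpa using this
      have hidx : ∀ (j i : ℕ), s - (r : ℤ) - (j : ℤ) * r - i = s - ((j + 1 : ℕ) : ℤ) * r - i := by
        intro j i; push_cast; ring
      calc ‖backIter G y x s r W1 - backIter G y x' s r W2‖
          ≤ ‖backIter G y x s r W1 - backIter G y x s r W2‖ +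
            ‖backIter G y x s r W2 - backIter G y x' s r W2‖ := tri
        _ ≤ κ * ‖W1 - W2‖ +
            ∑ i ∈ Finset.range r, L ^ (i + 1) * ‖x (s - i) - x' (s - i)‖ :=
            add_le_add (hcontract y x s W1 W2) (backIter_lipX G L hL hLip y x x' r s W2)
        _ ≤ κ * (∑ j ∈ Finset.range m, κ ^ j *
              ∑ i ∈ Finset.range r, L ^ (i + 1) *
                ‖x (s - r - j * r - i) - x' (s - r - j * r - i)‖) +
            ∑ i ∈ Finset.range r, L ^ (i + 1) * ‖x (s - i) - x' (s - i)‖ := by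
            gcongr
            exact ih (s - r)
        _ = ∑ j ∈ Finset.range (m + 1), κ ^ j *
              ∑ i ∈ Finset.range r, L ^ (i + 1) * ‖x (s - j * r - i) - x' (s - j * r - i)‖ := by
            rw [Finset.sum_range_succ', Finset.mul_sum]
            simp only [Nat.cast_zero, zero_mul, sub_zero, pow_zero, one_mul]
            congr 1
            refine Finset.sum_congr rfl fun j _ => ?_
            rw [← mul_assoc, ← pow_succ']
            congr 1
            refine Finset.sum_congr rfl fun i _ => ?_
            rw [hidx j i]
  -- summability
  have ha := hx t
  have ha' := hx' t
  have hCnn : (0 : ℝ) ≤ L ^ r * κ⁻¹ := mul_nonneg (pow_nonneg hL0 _) (inv_nonneg.mpr hκ0.le)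
  have hbound : ∀ (j i : ℕ), i < r →
      κ ^ j * (L ^ (i + 1) * ‖x (t - j * r - i) - x' (t - j * r - i)‖) ≤
      (L ^ r * κ⁻¹) * (κ ^ (((j * r + i : ℕ) : ℝ) / (r : ℝ)) *
        (‖x (t - (j * r + i : ℕ))‖ + ‖x' (t - (j * r + i : ℕ))‖)) := by
    intro j i hi
    have hidx : t - (j : ℤ) * r - i = t - ((j * r + i : ℕ) : ℤ) := by push_cast; ring
    rw [hidx]
    have h1 : ‖x (t - ((j * r + i : ℕ) : ℤ)) - x' (t - ((j * r + i : ℕ) : ℤ))‖ ≤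
        ‖x (t - ((j * r + i : ℕ) : ℤ))‖ + ‖x' (t - ((j * r + i : ℕ) : ℤ))‖ := norm_sub_le _ _
    have h2 : L ^ (i + 1) ≤ L ^ r := pow_le_pow_right₀ hL (by omega)
    have h3 : κ ^ j ≤ κ⁻¹ * κ ^ (((j * r + i : ℕ) : ℝ) / (r : ℝ)) := by
      have hexp : ((j * r + i : ℕ) : ℝ) / (r : ℝ) ≤ (j : ℝ) + 1 := by
        rw [div_le_iff₀ (by exact_mod_cast hr)]
        push_cast
        nlinarith [ (show (i : ℝ) ≤ (r : ℝ) - 1 by exact_mod_cast (by omega : (i:ℤ) ≤ (r:ℤ) - 1)) ]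
      have hge : κ ^ (((j : ℝ) + 1)) ≤ κ ^ (((j * r + i : ℕ) : ℝ) / (r : ℝ)) :=
        Real.rpow_le_rpow_of_exponent_ge hκ0 hκ1.le hexp
      have heq : κ ^ (((j : ℝ) + 1)) = κ * κ ^ j := by
        rw [show ((j : ℝ) + 1) = ((j + 1 : ℕ) : ℝ) by push_cast; ring, Real.rpow_natCast]
        ring
      rw [heq] at hge
      rw [le_inv_mul_iff₀ hκ0]
      linarith
    calc κ ^ j * (L ^ (i + 1) * ‖x (t - ((j * r + i : ℕ) : ℤ)) - x' (t - ((j * r + i : ℕ) : ℤ))‖)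
        ≤ (κ⁻¹ * κ ^ (((j * r + i : ℕ) : ℝ) / (r : ℝ))) *
          (L ^ r * (‖x (t - ((j * r + i : ℕ) : ℤ))‖ + ‖x' (t - ((j * r + i : ℕ) : ℤ))‖)) := by
          apply mul_le_mul h3
          · apply mul_le_mul h2 h1 (norm_nonneg _) (pow_nonneg hL0 _)
          · positivity
          · positivity
      _ = (L ^ r * κ⁻¹) * (κ ^ (((j * r + i : ℕ) : ℝ) / (r : ℝ)) *
            (‖x (t - (j * r + i : ℕ))‖ + ‖x' (t - (j * r + i : ℕ))‖)) := by ring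
  set g : ℕ → ℝ := fun n => κ ^ ((n : ℝ) / (r : ℝ)) * (‖x (t - n)‖ + ‖x' (t - n)‖) with hg
  have hgsum : ∀ m : ℕ, ∑ n ∈ Finset.range m, g n ≤
      (∑' n : ℕ, κ ^ ((n : ℝ) / (r : ℝ)) * ‖x (t - n)‖) +
      (∑' n : ℕ, κ ^ ((n : ℝ) / (r : ℝ)) * ‖x' (t - n)‖) := by
    intro m
    have : ∑ n ∈ Finset.range m, g n =
        (∑ n ∈ Finset.range m, κ ^ ((n : ℝ) / (r : ℝ)) * ‖x (t - n)‖) +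
        (∑ n ∈ Finset.range m, κ ^ ((n : ℝ) / (r : ℝ)) * ‖x' (t - n)‖) := by
      rw [← Finset.sum_add_distrib]
      exact Finset.sum_congr rfl fun n _ => by ring
    rw [this]
    apply add_le_add
    · exact Summable.sum_le_tsum _ (fun n _ => by positivity) ha
    · exact Summable.sum_le_tsum _ (fun n _ => by positivity) ha'
  have hfb : ∀ j, f j ≤ (L ^ r * κ⁻¹) * ∑ i ∈ Finset.range r, g (j * r + i) := by
    intro j
    rw [hf]
    simp only
    rw [Finset.mul_sum, Finset.mul_sum]
    apply Finset.sum_le_sum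
    intro i hi
    exact hbound j i (Finset.mem_range.mp hi)
  have hblock : ∀ m : ℕ, ∑ j ∈ Finset.range m, ∑ i ∈ Finset.range r, g (j * r + i) =
      ∑ n ∈ Finset.range (m * r), g n := by
    intro m
    induction m with
    | zero => simp
    | succ m ih =>
      rw [Finset.sum_range_succ, ih, show (m + 1) * r = m * r + r by ring,
        Finset.sum_range_add]
  have hsummable : Summable f := by
    apply summable_of_sum_range_le hfnn (c := (L ^ r * κ⁻¹) *
      ((∑' n : ℕ, κ ^ ((n : ℝ) / (r : ℝ)) * ‖x (t - n)‖) +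
       (∑' n : ℕ, κ ^ ((n : ℝ) / (r : ℝ)) * ‖x' (t - n)‖)))
    intro m
    calc ∑ j ∈ Finset.range m, f j
        ≤ ∑ j ∈ Finset.range m, (L ^ r * κ⁻¹) * ∑ i ∈ Finset.range r, g (j * r + i) :=
          Finset.sum_le_sum fun j _ => hfb j
      _ = (L ^ r * κ⁻¹) * ∑ n ∈ Finset.range (m * r), g n := by
          rw [← Finset.mul_sum, hblock m]
      _ ≤ _ := by
          apply mul_le_mul_of_nonneg_left (hgsum (m * r)) hCnn
  -- limit
  have hφ : Filter.Tendsto (fun m : ℕ => (m + 1) * r - 1) Filter.atTop Filter.atTop := by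
    apply Filter.tendsto_atTop_atTop.mpr
    intro b
    refine ⟨b, fun a ha => ?_⟩
    have : a + 1 ≤ (a + 1) * r := Nat.le_mul_of_pos_right _ hr
    omega
  have hcomp : ∀ (x0 : ℤ → V), ∀ m : ℕ, backIter G y x0 t (((m + 1) * r - 1) + 1) 0 =
      backIter G y x0 t ((m + 1) * r) 0 := by
    intro x0 m
    congr 1
    have := Nat.le_mul_of_pos_right (m + 1) hr
    omega
  have h1 : Filter.Tendsto (fun m : ℕ => backIter G y x t ((m + 1) * r) 0)
      Filter.atTop (nhds lam) := by
    refine Filter.Tendsto.congr (fun m => ?_) (hlam.comp hφ)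
    exact hcomp x m
  have h1' : Filter.Tendsto (fun m : ℕ => backIter G y x' t ((m + 1) * r) 0)
      Filter.atTop (nhds lam') := by
    refine Filter.Tendsto.congr (fun m => ?_) (hlam'.comp hφ)
    exact hcomp x' m
  have h2 : Filter.Tendsto
      (fun m : ℕ => ‖backIter G y x t ((m + 1) * r) 0 - backIter G y x' t ((m + 1) * r) 0‖)
      Filter.atTop (nhds ‖lam - lam'‖) := (h1.sub h1').norm
  refine le_of_tendsto h2 (Filter.Eventually.of_forall fun m => ?_)
  calc ‖backIter G y x t ((m + 1) * r) 0 - backIter G y x' t ((m + 1) * r) 0‖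
      ≤ ∑ j ∈ Finset.range (m + 1), f j := key (m + 1) t
    _ ≤ ∑' j : ℕ, f j := Summable.sum_le_tsum _ (fun i _ => hfnn i) hsummable
end
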